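/- Let n ≥ 3. In the Artin group A(Ã_{n-1}), the reverse cycle relation fails: a_1·a_2⋯a_n · a_1·a_2⋯a_{n-2} ≠ a_2·a_3⋯a_n · a_1·a_2⋯a_{n-1}. -/

import Mathlib

namespace Stmt6

/-- The braid relator `x y x (y x y)⁻¹` (weight 3). -/
def braidRel {γ : Type} (x y : FreeGroup γ) : FreeGroup γ := x * y * x * (y * x * y)⁻¹

/-- The commutation relator `x y (y x)⁻¹` (weight 2). -/
def commRel {γ : Type} (x y : FreeGroup γ) : FreeGroup γ := x * y * (y * x)⁻¹

/-- Relations of the Artin group `A(Ã_{n-1})`: the generator indexed by `i : Fin n`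
is `a_{i+1}`; cyclically adjacent generators braid, all other pairs commute. -/
def AtildeRels (n : ℕ) : Set (FreeGroup (Fin n)) :=
  { r | ∃ i j : Fin n,
      ((j : ℕ) = ((i : ℕ) + 1) % n ∧ r = braidRel (.of i) (.of j)) ∨
      (i ≠ j ∧ (j : ℕ) ≠ ((i : ℕ) + 1) % n ∧ (i : ℕ) ≠ ((j : ℕ) + 1) % n ∧
        r = commRel (.of i) (.of j)) }

/-- The Artin group `A(Ã_{n-1})`. -/
abbrev Atilde (n : ℕ) : Type := PresentedGroup (AtildeRels n)

/-- The standard generator `a_i` (for `1 ≤ i ≤ n`) of `A(Ã_{n-1})`. -/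
def a (n : ℕ) (i : ℕ) : Atilde n :=
  if h : 0 < n then PresentedGroup.of ⟨(i - 1) % n, Nat.mod_lt _ h⟩ else 1

/-- The ascending product `a_k · a_{k+1} ⋯ a_m` in `A(Ã_{n-1})`. -/
def aprod (n : ℕ) (k m : ℕ) : Atilde n :=
  ((List.range' k (m + 1 - k)).map (a n)).prod

/-! ### Auxiliary: representation in the affine symmetric group acting on `ℤ` -/

/-- The affine transposition step: add 1 on residue class `c`, subtract 1 on class `c+1`. -/
def fmap (n : ℕ) (c : ZMod n) (x : ℤ) : ℤ :=
  if (x : ZMod n) = c then x + 1 else if (x : ZMod n) = c + 1 then x - 1 else x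

lemma add_ne_self (n : ℕ) {t : ZMod n} (ht : t ≠ 0) (c : ZMod n) : c + t ≠ c := by
  intro h
  apply ht
  have h2 : c + t = c + 0 := by simpa using h
  exact add_left_cancel h2

lemma fmap_pos {n : ℕ} {c : ZMod n} {x : ℤ} (h : (x : ZMod n) = c) : fmap n c x = x + 1 :=
  if_pos h

lemma fmap_neg {n : ℕ} (h1 : (1 : ZMod n) ≠ 0) {c : ZMod n} {x : ℤ}
    (h : (x : ZMod n) = c + 1) : fmap n c x = x - 1 := by
  rw [fmap, if_neg, if_pos h]
  rw [h]; exact add_ne_self n h1 c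

lemma fmap_ne {n : ℕ} {c : ZMod n} {x : ℤ} (h : (x : ZMod n) ≠ c)
    (h' : (x : ZMod n) ≠ c + 1) : fmap n c x = x := by
  rw [fmap, if_neg h, if_neg h']

lemma fmap_invol (n : ℕ) (h1 : (1 : ZMod n) ≠ 0) (c : ZMod n) (x : ℤ) :
    fmap n c (fmap n c x) = x := by
  by_cases h : (x : ZMod n) = c
  · rw [fmap_pos h, fmap_neg h1 (by push_cast; rw [h]), add_sub_cancel_right]
  · by_cases h' : (x : ZMod n) = c + 1
    · rw [fmap_neg h1 h', fmap_pos (by push_cast; rw [h']; ring), sub_add_cancel]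
    · rw [fmap_ne h h', fmap_ne h h']

/-- The affine transposition as a permutation of `ℤ` (trivial in the degenerate case). -/
def sperm (n : ℕ) (c : ZMod n) : Equiv.Perm ℤ :=
  if h1 : (1 : ZMod n) = 0 then 1
  else ⟨fmap n c, fmap n c, fmap_invol n h1 c, fmap_invol n h1 c⟩

lemma sperm_apply {n : ℕ} (h1 : (1 : ZMod n) ≠ 0) (c : ZMod n) (x : ℤ) :
    sperm n c x = fmap n c x := by
  rw [sperm, dif_neg h1]; rfl

/-- Braid relation for adjacent affine transpositions. -/
lemma sperm_braid {n : ℕ} (h1 : (1 : ZMod n) ≠ 0) (h2 : (2 : ZMod n) ≠ 0) (c : ZMod n) :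
    sperm n c * sperm n (c + 1) * sperm n c = sperm n (c + 1) * sperm n c * sperm n (c + 1) := by
  have e1 : c + 1 ≠ c := add_ne_self n h1 c
  have e2 : c + 1 + 1 ≠ c := by
    rw [add_assoc, one_add_one_eq_two]; exact add_ne_self n h2 c
  have e3 : c ≠ c + 1 := e1.symm
  have e4 : c ≠ c + 1 + 1 := e2.symm
  have e5 : c + 1 + 1 ≠ c + 1 := add_ne_self n h1 (c + 1)
  ext x
  simp only [Equiv.Perm.mul_apply, sperm_apply h1]
  by_cases hc : (x : ZMod n) = c
  · have A1 : fmap n c x = x + 1 := fmap_pos hc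
    have A2 : fmap n (c + 1) (x + 1) = x + 1 + 1 :=
      fmap_pos (by push_cast; rw [hc])
    have A3 : fmap n c (x + 1 + 1) = x + 1 + 1 :=
      fmap_ne (show (((x + 1 + 1 : ℤ)) : ZMod n) ≠ c by push_cast; rw [hc]; exact e2)
        (show (((x + 1 + 1 : ℤ)) : ZMod n) ≠ c + 1 by push_cast; rw [hc]; exact e5)
    have B1 : fmap n (c + 1) x = x :=
      fmap_ne (show (x : ZMod n) ≠ c + 1 by rw [hc]; exact e3)
        (show (x : ZMod n) ≠ c + 1 + 1 by rw [hc]; exact e4)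
    rw [A1, A2, A3, B1, A1, A2]
  · by_cases hc1 : (x : ZMod n) = c + 1
    · have A1 : fmap n c x = x - 1 := fmap_neg h1 hc1
      have A2 : fmap n (c + 1) (x - 1) = x - 1 :=
        fmap_ne (show (((x - 1 : ℤ)) : ZMod n) ≠ c + 1 by push_cast; rw [hc1]; simpa using e3)
          (show (((x - 1 : ℤ)) : ZMod n) ≠ c + 1 + 1 by push_cast; rw [hc1]; simpa using e4)
      have A3 : fmap n c (x - 1) = x - 1 + 1 :=
        fmap_pos (show (((x - 1 : ℤ)) : ZMod n) = c by push_cast; rw [hc1]; ring)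
      have B1 : fmap n (c + 1) x = x + 1 := fmap_pos hc1
      have B2 : fmap n c (x + 1) = x + 1 :=
        fmap_ne (show (((x + 1 : ℤ)) : ZMod n) ≠ c by push_cast; rw [hc1]; exact e2)
          (show (((x + 1 : ℤ)) : ZMod n) ≠ c + 1 by push_cast; rw [hc1]; exact e5)
      have B3 : fmap n (c + 1) (x + 1) = x + 1 - 1 :=
        fmap_neg h1 (show (((x + 1 : ℤ)) : ZMod n) = c + 1 + 1 by push_cast; rw [hc1])
      rw [A1, A2, A3, B1, B2, B3]
      omega
    · by_cases hc2 : (x : ZMod n) = c + 1 + 1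
      · have A1 : fmap n c x = x := fmap_ne hc hc1
        have A2 : fmap n (c + 1) x = x - 1 := fmap_neg h1 hc2
        have A3 : fmap n c (x - 1) = x - 1 - 1 :=
          fmap_neg h1 (show (((x - 1 : ℤ)) : ZMod n) = c + 1 by push_cast; rw [hc2]; ring)
        have A4 : fmap n (c + 1) (x - 1 - 1) = x - 1 - 1 :=
          fmap_ne (show (((x - 1 - 1 : ℤ)) : ZMod n) ≠ c + 1 by push_cast; rw [hc2]; simpa using e3)
            (show (((x - 1 - 1 : ℤ)) : ZMod n) ≠ c + 1 + 1 by push_cast; rw [hc2]; simpa using e4)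
        rw [A1, A2, A3, A4]
      · have F1 : fmap n c x = x := fmap_ne hc hc1
        have F2 : fmap n (c + 1) x = x := fmap_ne hc1 hc2
        rw [F1, F2, F1, F2]

/-- Commutation for non-adjacent affine transpositions. -/
lemma sperm_comm {n : ℕ} (h1 : (1 : ZMod n) ≠ 0) {c d : ZMod n}
    (hcd : c ≠ d) (hdc1 : d ≠ c + 1) (hcd1 : c ≠ d + 1) :
    sperm n c * sperm n d = sperm n d * sperm n c := by
  have key : ∀ (c d : ZMod n), c ≠ d → d ≠ c + 1 → c ≠ d + 1 →
      ∀ x : ℤ, ((x : ZMod n) = c ∨ (x : ZMod n) = c + 1) →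
        fmap n c (fmap n d x) = fmap n d (fmap n c x) := by
    intro c d hcd hdc1 hcd1 x hx
    have g1 : c + 1 ≠ d := hdc1.symm
    have g2 : c + 1 ≠ d + 1 := fun h => hcd (add_right_cancel h)
    rcases hx with hx | hx
    · have D1 : fmap n d x = x :=
        fmap_ne (show (x : ZMod n) ≠ d by rw [hx]; exact hcd)
          (show (x : ZMod n) ≠ d + 1 by rw [hx]; exact hcd1)
      have C1 : fmap n c x = x + 1 := fmap_pos hx
      have D2 : fmap n d (x + 1) = x + 1 :=
        fmap_ne (show (((x + 1 : ℤ)) : ZMod n) ≠ d by push_cast; rw [hx]; exact g1)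
          (show (((x + 1 : ℤ)) : ZMod n) ≠ d + 1 by push_cast; rw [hx]; exact g2)
      rw [D1, C1, D2]
    · have D1 : fmap n d x = x :=
        fmap_ne (show (x : ZMod n) ≠ d by rw [hx]; exact g1)
          (show (x : ZMod n) ≠ d + 1 by rw [hx]; exact g2)
      have C1 : fmap n c x = x - 1 := fmap_neg h1 hx
      have D2 : fmap n d (x - 1) = x - 1 :=
        fmap_ne (show (((x - 1 : ℤ)) : ZMod n) ≠ d by push_cast; rw [hx]; simpa using hcd)
          (show (((x - 1 : ℤ)) : ZMod n) ≠ d + 1 by push_cast; rw [hx]; simpa using hcd1)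
      rw [D1, C1, D2]
  ext x
  simp only [Equiv.Perm.mul_apply, sperm_apply h1]
  by_cases hx : (x : ZMod n) = c ∨ (x : ZMod n) = c + 1
  · exact key c d hcd hdc1 hcd1 x hx
  · push_neg at hx
    by_cases hy : (x : ZMod n) = d ∨ (x : ZMod n) = d + 1
    · exact (key d c hcd.symm hcd1 hdc1 x hy).symm
    · push_neg at hy
      have F1 : fmap n c x = x := fmap_ne hx.1 hx.2
      have F2 : fmap n d x = x := fmap_ne hy.1 hy.2
      rw [F2, F1, F2]

/-- Composition of consecutive affine transpositions. -/
def gseq (n : ℕ) (k len : ℕ) : Equiv.Perm ℤ :=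
  ((List.range' k len).map (fun j => sperm n ((j : ℕ) : ZMod n))).prod

lemma gseq_succ (n k len : ℕ) :
    gseq n k (len + 1) = sperm n ((k : ℕ) : ZMod n) * gseq n (k + 1) len := by
  rw [gseq, List.range'_succ, List.map_cons, List.prod_cons]; rfl

lemma gseq_fix {n : ℕ} (h1 : (1 : ZMod n) ≠ 0) (len : ℕ) :
    ∀ (k : ℕ) (x : ℤ),
      (∀ j ∈ List.range' k len, ((j : ZMod n) ≠ (x : ZMod n)) ∧ ((j : ZMod n) + 1 ≠ (x : ZMod n))) →
      gseq n k len x = x := by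
  induction len with
  | zero => intro k x _; simp [gseq]
  | succ m ih =>
    intro k x h
    rw [gseq_succ, Equiv.Perm.mul_apply,
      ih (k + 1) x (fun j hj => h j (by rw [List.range'_succ]; exact List.mem_cons_of_mem _ hj)),
      sperm_apply h1]
    have hk := h k (by rw [List.range'_succ]; exact List.mem_cons_self)
    exact fmap_ne hk.1.symm (fun he => hk.2 he.symm)

lemma gseq_desc {n : ℕ} (h1 : (1 : ZMod n) ≠ 0) (len : ℕ) :
    ∀ (k : ℕ) (x : ℤ), ((x : ZMod n) = ((k + len : ℕ) : ZMod n)) →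
      gseq n k len x = x - len := by
  induction len with
  | zero => intro k x _; simp [gseq]
  | succ m ih =>
    intro k x h
    rw [gseq_succ, Equiv.Perm.mul_apply,
      ih (k + 1) x (by rw [h]; congr 1; omega), sperm_apply h1,
      fmap_neg h1 (show (((x - (m : ℕ) : ℤ)) : ZMod n) = (k : ZMod n) + 1 by
        push_cast; push_cast at h; rw [h]; ring)]
    push_cast
    ring


lemma gseq_concat (n k len : ℕ) :
    gseq n k (len + 1) = gseq n k len * sperm n (((k + len : ℕ)) : ZMod n) := by
  rw [gseq, gseq,
    show List.range' k (len + 1) = List.range' k len ++ [k + len] from by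
      rw [List.range'_concat]; simp,
    List.map_append, List.map_cons, List.map_nil, List.prod_append, List.prod_cons,
    List.prod_nil, mul_one]

/-- Images of the generators: generator `i : Fin n` (which is `a_{i+1}`) goes to the
affine transposition on residue classes `i+1, i+2`. -/
def Fgen (n : ℕ) : Fin n → Equiv.Perm ℤ := fun i => sperm n (((i : ℕ) : ZMod n) + 1)

lemma cast_ne_cast {n : ℕ} [NeZero n] {a b : ℕ} (ha : a < n) (hb : b < n) (h : a ≠ b) :
    (a : ZMod n) ≠ (b : ZMod n) := by
  intro he
  apply h
  have hv := congrArg ZMod.val he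
  rwa [ZMod.val_cast_of_lt ha, ZMod.val_cast_of_lt hb] at hv

lemma rels_check {n : ℕ} (hn : 3 ≤ n) :
    ∀ r ∈ AtildeRels n, FreeGroup.lift (Fgen n) r = 1 := by
  haveI : NeZero n := ⟨by omega⟩
  have h1 : (1 : ZMod n) ≠ 0 := by
    have := cast_ne_cast (n := n) (a := 1) (b := 0) (by omega) (by omega) (by omega)
    simpa using this
  have h2 : (2 : ZMod n) ≠ 0 := by
    have := cast_ne_cast (n := n) (a := 2) (b := 0) (by omega) (by omega) (by omega)
    simpa using this
  rintro r ⟨i, j, ⟨hij, rfl⟩ | ⟨hij, hji, hijr, rfl⟩⟩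
  · have hj : ((j : ℕ) : ZMod n) = ((i : ℕ) : ZMod n) + 1 := by
      rw [hij, ZMod.natCast_mod]; push_cast; ring
    simp only [braidRel, map_mul, map_inv, FreeGroup.lift_apply_of, Fgen, hj]
    rw [mul_inv_eq_one]
    exact sperm_braid h1 h2 _
  · have hne : ((i : ℕ) : ZMod n) ≠ ((j : ℕ) : ZMod n) :=
      cast_ne_cast i.isLt j.isLt (fun h => hij (Fin.val_injective h))
    have hA : ((j : ℕ) : ZMod n) ≠ ((i : ℕ) : ZMod n) + 1 := by
      intro h
      apply hji
      have h' : ((j : ℕ) : ZMod n) = (((i : ℕ) + 1 : ℕ) : ZMod n) := by push_cast; exact h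
      have hv := congrArg ZMod.val h'
      rwa [ZMod.val_cast_of_lt j.isLt, ZMod.val_natCast] at hv
    have hB : ((i : ℕ) : ZMod n) ≠ ((j : ℕ) : ZMod n) + 1 := by
      intro h
      apply hijr
      have h' : ((i : ℕ) : ZMod n) = (((j : ℕ) + 1 : ℕ) : ZMod n) := by push_cast; exact h
      have hv := congrArg ZMod.val h'
      rwa [ZMod.val_cast_of_lt i.isLt, ZMod.val_natCast] at hv
    simp only [commRel, map_mul, map_inv, FreeGroup.lift_apply_of, Fgen]
    rw [mul_inv_eq_one]
    exact sperm_comm h1 (fun h => hne (add_right_cancel h))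
      (fun h => hA (add_right_cancel h)) (fun h => hB (add_right_cancel h))

/-- The homomorphism from the Artin group to the affine symmetric group. -/
def phi {n : ℕ} (hn : 3 ≤ n) : Atilde n →* Equiv.Perm ℤ :=
  PresentedGroup.toGroup (rels_check hn)

lemma phi_a {n : ℕ} (hn : 3 ≤ n) {j : ℕ} (hj : 1 ≤ j) :
    phi hn (a n j) = sperm n ((j : ℕ) : ZMod n) := by
  rw [a, dif_pos (show 0 < n by omega), phi, PresentedGroup.toGroup.of]
  show sperm n ((((j - 1) % n : ℕ) : ZMod n) + 1) = sperm n ((j : ℕ) : ZMod n)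
  congr 1
  rw [ZMod.natCast_mod,
    show ((j - 1 : ℕ) : ZMod n) + 1 = (((j - 1) + 1 : ℕ) : ZMod n) from by push_cast; ring,
    Nat.sub_add_cancel hj]

lemma phi_aprod {n : ℕ} (hn : 3 ≤ n) {k m : ℕ} (hk : 1 ≤ k) :
    phi hn (aprod n k m) = gseq n k (m + 1 - k) := by
  rw [aprod, map_list_prod, List.map_map, gseq]
  congr 1
  apply List.map_congr_left
  intro j hj
  exact phi_a hn (le_trans hk (List.mem_range'_1.mp hj).1)

/-- For `n ≥ 3` the reverse cycle relation fails in `A(Ã_{n-1})`: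
`a_1 ⋯ a_n · a_1 ⋯ a_{n-2} ≠ a_2 ⋯ a_n · a_1 ⋯ a_{n-1}`. -/
theorem reverse_cycle_relation_fails (n : ℕ) (hn : 3 ≤ n) :
    aprod n 1 n * aprod n 1 (n - 2) ≠ aprod n 2 n * aprod n 1 (n - 1) := by
  obtain ⟨m, rfl⟩ : ∃ m, n = m + 3 := ⟨n - 3, by omega⟩
  haveI : NeZero (m + 3) := ⟨by omega⟩
  have h1 : (1 : ZMod (m + 3)) ≠ 0 := by
    have := cast_ne_cast (n := m + 3) (a := 1) (b := 0) (by omega) (by omega) (by omega)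
    simpa using this
  have hm : ((m : ℕ) : ZMod (m + 3)) = -3 := by
    have h0 := ZMod.natCast_self (m + 3)
    push_cast at h0
    linear_combination h0
  intro heq
  have H := congrArg (fun g : Atilde (m + 3) => phi hn g 0) heq
  simp only [map_mul, Equiv.Perm.mul_apply] at H
  rw [phi_aprod hn (k := 1) (m := m + 3) le_rfl,
    phi_aprod hn (k := 1) (m := m + 3 - 2) le_rfl,
    phi_aprod hn (k := 2) (m := m + 3) one_le_two,
    phi_aprod hn (k := 1) (m := m + 3 - 1) le_rfl,
    show m + 3 + 1 - 1 = m + 3 from by omega,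
    show m + 3 - 2 + 1 - 1 = m + 1 from by omega,
    show m + 3 + 1 - 2 = m + 2 from by omega,
    show m + 3 - 1 + 1 - 1 = m + 2 from by omega] at H
  -- the four values
  have V1 : gseq (m + 3) 1 (m + 1) 0 = 0 := by
    apply gseq_fix h1
    intro j hj
    obtain ⟨hj1, hj2⟩ := List.mem_range'_1.mp hj
    constructor
    · rw [Int.cast_zero, show (0 : ZMod (m + 3)) = ((0 : ℕ) : ZMod (m + 3)) from by norm_num]
      exact cast_ne_cast (by omega) (by omega) (by omega)
    · rw [Int.cast_zero, show (0 : ZMod (m + 3)) = ((0 : ℕ) : ZMod (m + 3)) from by norm_num,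
        show ((j : ℕ) : ZMod (m + 3)) + 1 = ((j + 1 : ℕ) : ZMod (m + 3)) from by push_cast; ring]
      exact cast_ne_cast (by omega) (by omega) (by omega)
  have s1 : sperm (m + 3) (((m + 3 : ℕ)) : ZMod (m + 3)) 0 = 1 := by
    rw [ZMod.natCast_self, sperm_apply h1, fmap_pos (show ((0 : ℤ) : ZMod (m + 3)) = 0 from by
      norm_num)]
    norm_num
  have s2 : gseq (m + 3) 2 (m + 1) 1 = 1 := by
    apply gseq_fix h1
    intro j hj
    obtain ⟨hj1, hj2⟩ := List.mem_range'_1.mp hj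
    have c1 : ((1 : ℤ) : ZMod (m + 3)) = ((1 : ℕ) : ZMod (m + 3)) := by norm_num
    constructor
    · rw [c1]
      exact cast_ne_cast (by omega) (by omega) (by omega)
    · rw [c1, show ((j : ℕ) : ZMod (m + 3)) + 1 = ((j + 1 : ℕ) : ZMod (m + 3)) from by
        push_cast; ring]
      by_cases hj3 : j + 1 = m + 3
      · rw [hj3, ZMod.natCast_self, Nat.cast_one]
        exact fun h => h1 h.symm
      · exact cast_ne_cast (by omega) (by omega) (by omega)
  have s3 : sperm (m + 3) ((1 : ℕ) : ZMod (m + 3)) 1 = 2 := by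
    rw [sperm_apply h1, fmap_pos (show ((1 : ℤ) : ZMod (m + 3)) = ((1 : ℕ) : ZMod (m + 3)) from by
      push_cast; ring)]
    norm_num
  have V2 : gseq (m + 3) 1 (m + 3) 0 = 2 := by
    show gseq (m + 3) 1 (m + 2 + 1) 0 = 2
    rw [gseq_succ, Equiv.Perm.mul_apply, show (1 : ℕ) + 1 = 2 from rfl,
      show (m + 2 : ℕ) = m + 1 + 1 from rfl, gseq_concat, Equiv.Perm.mul_apply,
      show (2 + (m + 1) : ℕ) = m + 3 from by omega, s1, s2, s3]
  have V3 : gseq (m + 3) 1 (m + 2) 0 = 0 - ((m + 2 : ℕ) : ℤ) := by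
    apply gseq_desc h1
    push_cast
    rw [hm]; ring
  have V4 : gseq (m + 3) 2 (m + 2) (0 - ((m + 2 : ℕ) : ℤ)) =
      0 - ((m + 2 : ℕ) : ℤ) - ((m + 2 : ℕ) : ℤ) := by
    apply gseq_desc h1
    push_cast
    rw [hm]; ring
  rw [V1, V2, V3, V4] at H
  push_cast at H
  omega

end Stmt6
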